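/- Let q ≥ 0 be an integer and r_0 > 0, and define H_L(z) = (q·(z/r_0)^(2q+2) + 1) / ((z/r_0)^(2q+2) − 1) for z > r_0. Then for all real ρ, r with r_0 < ρ ≤ r, ∫_ρ^r (H_L(z) − 1)/z dz = log( (ρ²/r²) · √((r/r_0)^(2q+2) − 1) / √((ρ/r_0)^(2q+2) − 1) ). -/

import Mathlib

open MeasureTheory

/-- closed-form integrating factor:
`∫_ρ..r (H_L(z) − 1)/z dz = log((ρ²/r²) √((r/r₀)^(2q+2) − 1)/√((ρ/r₀)^(2q+2) − 1))`,
where `H_L(z) = (q(z/r₀)^(2q+2) + 1)/((z/r₀)^(2q+2) − 1)`. -/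
theorem integrating_factor_closed_form
    (q : ℕ) (r₀ : ℝ) (hr₀ : 0 < r₀) (ρ r : ℝ) (hρ : r₀ < ρ) (hρr : ρ ≤ r) :
    ∫ z in ρ..r,
        (((q : ℝ) * (z / r₀) ^ (2 * q + 2) + 1) /
            ((z / r₀) ^ (2 * q + 2) - 1) - 1) / z =
      Real.log ((ρ ^ 2 / r ^ 2) * Real.sqrt ((r / r₀) ^ (2 * q + 2) - 1) /
        Real.sqrt ((ρ / r₀) ^ (2 * q + 2) - 1)) := by
  have hr₀' : r₀ ≠ 0 := ne_of_gt hr₀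
  have key : ∀ x : ℝ, r₀ < x → 1 < (x / r₀) ^ (2 * q + 2) := by
    intro x hx
    have h1 : 1 < x / r₀ := (one_lt_div hr₀).2 hx
    exact one_lt_pow₀ h1 (by omega)
  -- antiderivative
  set F : ℝ → ℝ := fun z => (1 / 2) * Real.log ((z / r₀) ^ (2 * q + 2) - 1)
      - 2 * Real.log z with hF
  have hderiv : ∀ z ∈ Set.uIcc ρ r,
      HasDerivAt F
        ((((q : ℝ) * (z / r₀) ^ (2 * q + 2) + 1) /
            ((z / r₀) ^ (2 * q + 2) - 1) - 1) / z) z := by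
    intro z hz
    rw [Set.uIcc_of_le hρr] at hz
    have hzr₀ : r₀ < z := lt_of_lt_of_le hρ hz.1
    have hz0 : 0 < z := hr₀.trans hzr₀
    have hu : 1 < (z / r₀) ^ (2 * q + 2) := key z hzr₀
    have hu0 : (z / r₀) ^ (2 * q + 2) - 1 ≠ 0 := by linarith
    have h1 : HasDerivAt (fun z : ℝ => (z / r₀) ^ (2 * q + 2))
        (((2 * q + 2 : ℕ) : ℝ) * (z / r₀) ^ (2 * q + 1) * (1 / r₀)) z := by
      have := ((hasDerivAt_id z).div_const r₀).fun_pow (2 * q + 2)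
      simpa using this
    have h2 : HasDerivAt (fun z : ℝ => (z / r₀) ^ (2 * q + 2) - 1)
        (((2 * q + 2 : ℕ) : ℝ) * (z / r₀) ^ (2 * q + 1) * (1 / r₀)) z :=
      h1.sub_const 1
    have h3 := (h2.log hu0).const_mul (1 / 2 : ℝ)
    have h4 := (Real.hasDerivAt_log (ne_of_gt hz0)).const_mul (2 : ℝ)
    have h5 := h3.fun_sub h4
    refine h5.congr_deriv ?_
    have hpow : (z / r₀) ^ (2 * q + 2) = (z / r₀) ^ (2 * q + 1) * (z / r₀) := by
      ring
    have hsub : z ^ (2 * q + 2) - r₀ ^ (2 * q + 2) ≠ 0 := by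
      have h := pow_lt_pow_left₀ hzr₀ hr₀.le (n := 2 * q + 2) (by omega)
      exact ne_of_gt (by linarith)
    push_cast
    simp only [div_pow]
    field_simp
    ring
  have hcont : IntervalIntegrable
      (fun z => (((q : ℝ) * (z / r₀) ^ (2 * q + 2) + 1) /
            ((z / r₀) ^ (2 * q + 2) - 1) - 1) / z) volume ρ r := by
    apply ContinuousOn.intervalIntegrable
    apply ContinuousOn.div
    · apply ContinuousOn.sub
      · apply ContinuousOn.div
        · fun_prop
        · fun_prop
        · intro z hz
          rw [Set.uIcc_of_le hρr] at hz
          have := key z (lt_of_lt_of_le hρ hz.1)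
          intro h; rw [sub_eq_zero] at h; linarith
      · exact continuousOn_const
    · fun_prop
    · intro z hz
      rw [Set.uIcc_of_le hρr] at hz
      have : 0 < z := hr₀.trans (lt_of_lt_of_le hρ hz.1)
      exact ne_of_gt this
  rw [intervalIntegral.integral_eq_sub_of_hasDerivAt hderiv hcont]
  -- now algebra on logs
  have huρ : 1 < (ρ / r₀) ^ (2 * q + 2) := key ρ hρ
  have hur : 1 < (r / r₀) ^ (2 * q + 2) := key r (hρ.trans_le hρr)
  have hρ0 : 0 < ρ := hr₀.trans hρ
  have hr0 : 0 < r := hρ0.trans_le hρr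
  have hsρ : 0 < Real.sqrt ((ρ / r₀) ^ (2 * q + 2) - 1) :=
    Real.sqrt_pos.2 (by linarith)
  have hsr : 0 < Real.sqrt ((r / r₀) ^ (2 * q + 2) - 1) :=
    Real.sqrt_pos.2 (by linarith)
  rw [Real.log_div (by positivity) (ne_of_gt hsρ),
      Real.log_mul (by positivity) (ne_of_gt hsr),
      Real.log_div (by positivity) (by positivity),
      Real.log_sqrt (by linarith), Real.log_sqrt (by linarith),
      Real.log_pow, Real.log_pow]
  simp only [hF]
  push_cast
  ring
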